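/- There is a universal constant C such that the following holds. Let n be a natural number, let F be a nonempty finite family of functions from {0,1}^n to [-1,1], let T be a nonempty finite set of functions from {0,1}^n to [0,1], and let δ, ε ∈ (0,1) satisfy C·(1 + log(|F|·|T|))/(ε^2·δ^2) ≤ 2^n. Define the compatibility property T_{F,δ} to be the set of Boolean functions g : {0,1}^n → {0,1} such that for some h ∈ T, |E_{x uniform}[f(x)·(g(x) − h(x))]| ≤ δ for every f ∈ F. Then there exist a natural number m ≤ C·(1 + log(|F|·|T|))/(ε^2·δ^2) and a (possibly randomized) tester T' : ({0,1}^n × {0,1})^m × {0,1}^ℓ → {0,1} for some ℓ, such that on m i.i.d. uniform samples x_i with labels g(x_i) and a uniform seed: if g ∈ T_{F,δ} then T' outputs 1 with probability at least 2/3, and if g is not within distance ε of any member of T_{F,δ} then T' outputs 0 with probability at least 2/3. -/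

import Mathlib

/-- Probability that the randomized tester `T` outputs `1` (Accept) on `m` i.i.d.
uniform samples from `{0,1}^n` labeled by `g`, with a uniform seed in `{0,1}^ℓ`. -/
noncomputable def acceptProb (n m l : ℕ)
    (T : (Fin m → (Fin n → Bool)) → (Fin m → Bool) → (Fin l → Bool) → Bool)
    (g : (Fin n → Bool) → Bool) : ℝ :=
  (∑ x : Fin m → (Fin n → Bool), ∑ r : Fin l → Bool,
      if T x (fun i => g (x i)) r then (1 : ℝ) else 0) / ((2 : ℝ) ^ (n * m) * 2 ^ l)

/-- Normalized Hamming distance between Boolean functions on `{0,1}^n`. -/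
noncomputable def fdist (n : ℕ) (f g : (Fin n → Bool) → Bool) : ℝ :=
  ((Finset.univ.filter fun x => f x ≠ g x).card : ℝ) / 2 ^ n

/-- `closeTo n P ε` is `P_ε`: the Boolean functions within distance `ε` of `P`. -/
def closeTo (n : ℕ) (P : Set ((Fin n → Bool) → Bool)) (ε : ℝ) :
    Set ((Fin n → Bool) → Bool) :=
  {f | ∃ g ∈ P, fdist n f g ≤ ε}

/-- The compatibility property `T_{F,δ}`: Boolean functions `g` that are
`(F, δ)`-indistinguishable (under the uniform distribution) from some template
`h ∈ Temp`. -/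
def compat (n : ℕ) (F Temp : Finset ((Fin n → Bool) → ℝ)) (δ : ℝ) :
    Set ((Fin n → Bool) → Bool) :=
  {g | ∃ h ∈ Temp, ∀ f ∈ F,
    |∑ x : Fin n → Bool, ((1 : ℝ) / 2 ^ n) *
      (f x * ((if g x then (1 : ℝ) else 0) - h x))| ≤ δ}


open Finset

noncomputable def ind (p : Prop) : ℝ := @ite ℝ p (Classical.propDecidable p) 1 0

lemma ind_nonneg (p : Prop) : 0 ≤ ind p := by
  unfold ind; split <;> norm_num

lemma ind_le_one (p : Prop) : ind p ≤ 1 := by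
  unfold ind; split <;> norm_num

lemma ind_of (p : Prop) (h : p) : ind p = 1 := by unfold ind; exact if_pos h
lemma ind_of_not (p : Prop) (h : ¬ p) : ind p = 0 := by unfold ind; exact if_neg h

lemma ind_mono {p q : Prop} (h : p → q) : ind p ≤ ind q := by
  unfold ind
  split
  · rw [if_pos (h (by assumption))]
  · split <;> norm_num

lemma exp_le_quad {u : ℝ} (hu : |u| ≤ 1) : Real.exp u ≤ 1 + u + u ^ 2 := by
  have h := Real.exp_bound hu (by norm_num : 0 < 2)
  have h2 : |Real.exp u - (1 + u)| ≤ |u| ^ 2 * (3 / 2 / 2) := by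
    convert h using 2
    · simp [Finset.sum_range_succ, Nat.factorial]
    · norm_num
  have h3 := (abs_sub_le_iff.1 h2).1
  have h4 : |u| ^ 2 = u ^ 2 := sq_abs u
  nlinarith [sq_nonneg u]

section Hoeffding

variable {α : Type*} [Fintype α]

lemma mgf_le {w X : α → ℝ} (hw0 : ∀ a, 0 ≤ w a) (hw1 : ∑ a, w a = 1)
    (hX : ∀ a, |X a| ≤ 1) (hm : ∑ a, w a * X a = 0) {t : ℝ} (ht0 : 0 ≤ t) (ht : t ≤ 1) :
    ∑ a, w a * Real.exp (t * X a) ≤ Real.exp (t ^ 2) := by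
  have step1 : ∑ a, w a * Real.exp (t * X a) ≤ ∑ a, w a * (1 + t * X a + (t * X a) ^ 2) := by
    apply Finset.sum_le_sum
    intro a _
    apply mul_le_mul_of_nonneg_left _ (hw0 a)
    apply exp_le_quad
    rw [abs_mul]
    calc |t| * |X a| ≤ 1 * 1 := by
          apply mul_le_mul (by rwa [abs_of_nonneg ht0]) (hX a) (abs_nonneg _) zero_le_one
      _ = 1 := one_mul 1
  have step2 : ∑ a, w a * (1 + t * X a + (t * X a) ^ 2)
      = (∑ a, w a) + t * (∑ a, w a * X a) + t ^ 2 * ∑ a, w a * X a ^ 2 := by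
    rw [Finset.mul_sum, Finset.mul_sum, ← Finset.sum_add_distrib, ← Finset.sum_add_distrib]
    apply Finset.sum_congr rfl
    intro a _; ring
  have step3 : ∑ a, w a * X a ^ 2 ≤ 1 := by
    calc ∑ a, w a * X a ^ 2 ≤ ∑ a, w a * 1 := by
          apply Finset.sum_le_sum
          intro a _
          apply mul_le_mul_of_nonneg_left _ (hw0 a)
          have h1 := (abs_le.1 (hX a)).1
          have h2 := (abs_le.1 (hX a)).2
          nlinarith
      _ = 1 := by simp [hw1]
  have step4 : ∑ a, w a * Real.exp (t * X a) ≤ 1 + t ^ 2 := by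
    have h5 := step1.trans_eq step2
    rw [hw1, hm] at h5
    nlinarith [sq_nonneg t]
  calc ∑ a, w a * Real.exp (t * X a) ≤ t ^ 2 + 1 := by linarith
    _ ≤ Real.exp (t ^ 2) := Real.add_one_le_exp _

lemma hoeffding {ι : Type*} [Fintype ι] [DecidableEq ι] [Nonempty ι]
    (w : ι → α → ℝ) (X : ι → α → ℝ)
    (hw0 : ∀ i a, 0 ≤ w i a) (hw1 : ∀ i, ∑ a, w i a = 1)
    (hX : ∀ i a, |X i a| ≤ 1) (hm : ∀ i, ∑ a, w i a * X i a = 0)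
    {s : ℝ} (hs0 : 0 ≤ s) (hs2 : s ≤ 2 * Fintype.card ι) :
    ∑ x : ι → α, (∏ i, w i (x i)) * ind (s ≤ ∑ i, X i (x i))
      ≤ Real.exp (-(s ^ 2) / (4 * Fintype.card ι)) := by
  classical
  set N : ℝ := (Fintype.card ι : ℝ) with hNdef
  have hN : 0 < N := by
    simp only [hNdef]
    exact_mod_cast Fintype.card_pos (α := ι)
  set t : ℝ := s / (2 * N) with htdef
  have ht0 : 0 ≤ t := by positivity
  have ht1 : t ≤ 1 := by
    rw [htdef, div_le_one (by positivity)]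
    linarith
  have key : ∀ x : ι → α, (∏ i, w i (x i)) * ind (s ≤ ∑ i, X i (x i))
      ≤ Real.exp (-(t * s)) * ∏ i, (w i (x i) * Real.exp (t * X i (x i))) := by
    intro x
    have hprodnn : 0 ≤ ∏ i, w i (x i) := Finset.prod_nonneg fun i _ => hw0 i (x i)
    have heq : Real.exp (-(t*s)) * ∏ i, (w i (x i) * Real.exp (t * X i (x i)))
        = (∏ i, w i (x i)) * (Real.exp (-(t*s)) * Real.exp (t * ∑ i, X i (x i))) := by
      rw [Finset.prod_mul_distrib, ← Real.exp_sum, ← Finset.mul_sum]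
      ring
    rw [heq]
    apply mul_le_mul_of_nonneg_left _ hprodnn
    rw [← Real.exp_add]
    unfold ind
    split
    · rename_i hle
      rw [Real.one_le_exp_iff]
      nlinarith
    · positivity
  calc ∑ x : ι → α, (∏ i, w i (x i)) * ind (s ≤ ∑ i, X i (x i))
      ≤ ∑ x : ι → α, Real.exp (-(t*s)) * ∏ i, (w i (x i) * Real.exp (t * X i (x i))) :=
        Finset.sum_le_sum fun x _ => key x
    _ = Real.exp (-(t*s)) * ∏ i, ∑ a, w i a * Real.exp (t * X i a) := by
        rw [← Finset.mul_sum]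
        congr 1
        rw [Finset.prod_univ_sum, ← Fintype.piFinset_univ]
    _ ≤ Real.exp (-(t*s)) * ∏ _i : ι, Real.exp (t ^ 2) := by
        apply mul_le_mul_of_nonneg_left _ (Real.exp_nonneg _)
        apply Finset.prod_le_prod
        · intro i _
          exact Finset.sum_nonneg fun a _ => mul_nonneg (hw0 i a) (Real.exp_nonneg _)
        · intro i _
          exact mgf_le (hw0 i) (hw1 i) (hX i) (hm i) ht0 ht1
    _ = Real.exp (-(t*s) + N * t ^ 2) := by
        rw [Finset.prod_const, ← Real.exp_nat_mul, ← Real.exp_add, Finset.card_univ]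
    _ = Real.exp (-(s ^ 2) / (4 * N)) := by
        congr 1
        rw [htdef]
        field_simp
        ring

end Hoeffding

section Prob

variable {ι α : Type*} [Fintype ι] [DecidableEq ι] [Fintype α]

noncomputable def wPr (w : ι → α → ℝ) (E : (ι → α) → Prop) : ℝ :=
  ∑ x : ι → α, (∏ i, w i (x i)) * ind (E x)

lemma wPr_nonneg (w : ι → α → ℝ) (hw0 : ∀ i a, 0 ≤ w i a) (E : (ι → α) → Prop) :
    0 ≤ wPr w E :=
  Finset.sum_nonneg fun x _ =>
    mul_nonneg (Finset.prod_nonneg fun i _ => hw0 i (x i)) (ind_nonneg _)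

lemma sum_prod_w (w : ι → α → ℝ) (hw1 : ∀ i, ∑ a, w i a = 1) :
    ∑ x : ι → α, (∏ i, w i (x i)) = 1 := by
  rw [← Fintype.piFinset_univ, ← Finset.prod_univ_sum]
  simp [hw1]

lemma wPr_mono (w : ι → α → ℝ) (hw0 : ∀ i a, 0 ≤ w i a) {E E' : (ι → α) → Prop}
    (h : ∀ x, E x → E' x) : wPr w E ≤ wPr w E' :=
  Finset.sum_le_sum fun x _ =>
    mul_le_mul_of_nonneg_left (ind_mono (h x)) (Finset.prod_nonneg fun i _ => hw0 i (x i))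

lemma wPr_compl (w : ι → α → ℝ) (hw1 : ∀ i, ∑ a, w i a = 1) (E : (ι → α) → Prop) :
    wPr w (fun x => ¬ E x) = 1 - wPr w E := by
  unfold wPr
  rw [← sum_prod_w w hw1, ← Finset.sum_sub_distrib]
  apply Finset.sum_congr rfl
  intro x _
  by_cases h : E x
  · rw [ind_of _ h, ind_of_not _ (not_not_intro h)]; ring
  · rw [ind_of _ h, ind_of_not _ h]; ring

lemma wPr_or (w : ι → α → ℝ) (hw0 : ∀ i a, 0 ≤ w i a) (E E' : (ι → α) → Prop) :
    wPr w (fun x => E x ∨ E' x) ≤ wPr w E + wPr w E' := by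
  unfold wPr
  rw [← Finset.sum_add_distrib]
  apply Finset.sum_le_sum
  intro x _
  have hp : 0 ≤ ∏ i, w i (x i) := Finset.prod_nonneg fun i _ => hw0 i (x i)
  rw [← mul_add]
  apply mul_le_mul_of_nonneg_left _ hp
  by_cases h : E x ∨ E' x
  · rw [ind_of _ h]
    rcases h with h | h
    · have := ind_nonneg (E' x); rw [ind_of _ h]; linarith
    · have := ind_nonneg (E x); rw [ind_of _ h]; linarith
  · rw [ind_of_not _ h]
    have := ind_nonneg (E x); have := ind_nonneg (E' x); linarith

lemma wPr_exists {κ : Type*} (w : ι → α → ℝ) (hw0 : ∀ i a, 0 ≤ w i a)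
    (s : Finset κ) (E : κ → (ι → α) → Prop) :
    wPr w (fun x => ∃ k ∈ s, E k x) ≤ ∑ k ∈ s, wPr w (E k) := by
  unfold wPr
  rw [Finset.sum_comm]
  apply Finset.sum_le_sum
  intro x _
  have hp : 0 ≤ ∏ i, w i (x i) := Finset.prod_nonneg fun i _ => hw0 i (x i)
  rw [← Finset.mul_sum]
  apply mul_le_mul_of_nonneg_left _ hp
  by_cases h : ∃ k ∈ s, E k x
  · rw [ind_of _ h]
    obtain ⟨k0, hk0, hE⟩ := h
    calc (1 : ℝ) = ind (E k0 x) := (ind_of _ hE).symm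
      _ ≤ ∑ k ∈ s, ind (E k x) :=
        Finset.single_le_sum (fun k _ => ind_nonneg (E k x)) hk0
  · rw [ind_of_not _ h]
    exact Finset.sum_nonneg fun k _ => ind_nonneg _

lemma exists_not_of_wPr_lt_one (w : ι → α → ℝ) (hw1 : ∀ i, ∑ a, w i a = 1)
    {E : (ι → α) → Prop} (h : wPr w E < 1) : ∃ x, ¬ E x := by
  by_contra hc
  push_neg at hc
  have : wPr w E = 1 := by
    unfold wPr
    rw [← sum_prod_w w hw1]
    apply Finset.sum_congr rfl
    intro x _
    rw [ind_of _ (hc x), mul_one]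
  linarith

lemma marginal (w : ι → α → ℝ) (hw1 : ∀ i, ∑ a, w i a = 1) (j : ι) (Y : α → ℝ) :
    ∑ x : ι → α, (∏ i, w i (x i)) * Y (x j) = ∑ a, w j a * Y a := by
  have h1 : ∀ x : ι → α, (∏ i, w i (x i)) * Y (x j)
      = ∏ i, (if i = j then w i (x i) * Y (x i) else w i (x i)) := by
    intro x
    have e1 : (∏ i, if i = j then w i (x i) * Y (x i) else w i (x i))
        = (w j (x j) * Y (x j)) * ∏ i ∈ Finset.univ.erase j, w i (x i) := by
      rw [← Finset.mul_prod_erase Finset.univ _ (Finset.mem_univ j), if_pos rfl]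
      congr 1
      exact Finset.prod_congr rfl fun i hi => if_neg (Finset.ne_of_mem_erase hi)
    have e2 : (∏ i, w i (x i)) = w j (x j) * ∏ i ∈ Finset.univ.erase j, w i (x i) :=
      (Finset.mul_prod_erase Finset.univ _ (Finset.mem_univ j)).symm
    rw [e1, e2]
    ring
  set f : ι → α → ℝ := fun i a => if i = j then w i a * Y a else w i a with hf
  calc ∑ x : ι → α, (∏ i, w i (x i)) * Y (x j)
      = ∑ x ∈ Fintype.piFinset (fun _ : ι => (Finset.univ : Finset α)), ∏ i, f i (x i) := by
        rw [Fintype.piFinset_univ]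
        apply Finset.sum_congr rfl
        intro x _
        rw [h1 x]
    _ = ∏ i, ∑ a, f i a := Finset.sum_prod_piFinset _ _
    _ = ∑ a, w j a * Y a := by
        rw [Finset.prod_eq_single j]
        · simp only [hf, if_pos rfl]
        · intro i _ hij
          simp only [hf, if_neg hij]
          exact hw1 i
        · intro h; exact absurd (Finset.mem_univ j) h

lemma markov (w : ι → α → ℝ) (hw0 : ∀ i a, 0 ≤ w i a)
    (D : (ι → α) → ℝ) (hD : ∀ x, 0 ≤ D x) {ε : ℝ} (hε : 0 < ε) :
    wPr w (fun x => ε < D x) ≤ (∑ x : ι → α, (∏ i, w i (x i)) * D x) / ε := by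
  rw [le_div_iff₀ hε]
  unfold wPr
  rw [Finset.sum_mul]
  apply Finset.sum_le_sum
  intro x _
  have hp : 0 ≤ ∏ i, w i (x i) := Finset.prod_nonneg fun i _ => hw0 i (x i)
  by_cases h : ε < D x
  · rw [ind_of _ h, mul_one]
    exact mul_le_mul_of_nonneg_left h.le hp
  · rw [ind_of_not _ h, mul_zero, zero_mul]
    exact mul_nonneg hp (hD x)

end Prob

lemma fdist_nonneg (n : ℕ) (f g : (Fin n → Bool) → Bool) : 0 ≤ fdist n f g := by
  unfold fdist; positivity

set_option maxHeartbeats 2000000 in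
lemma partA (n : ℕ) (F Temp : Finset ((Fin n → Bool) → ℝ))
    (hFb : ∀ f ∈ F, ∀ x, f x ∈ Set.Icc (-1 : ℝ) 1)
    (hTb : ∀ h ∈ Temp, ∀ x, h x ∈ Set.Icc (0 : ℝ) 1)
    {δ ε : ℝ} (hδ : δ ∈ Set.Ioo (0:ℝ) 1) (hε : ε ∈ Set.Ioo (0:ℝ) 1)
    (hbig : 2 * (F.card : ℝ) * Real.exp (-((ε * δ / 8 * 2 ^ n) ^ 2) / (4 * 2 ^ n)) ≤ 1 / 2)
    (g : (Fin n → Bool) → Bool) (h : (Fin n → Bool) → ℝ) (hh : h ∈ Temp)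
    (hclose : ∀ f ∈ F, |∑ x : Fin n → Bool, ((1:ℝ) / 2 ^ n) *
        (f x * ((if g x then (1:ℝ) else 0) - h x))| ≤ δ + ε * δ / 8) :
    g ∈ closeTo n (compat n F Temp δ) ε := by
  obtain ⟨hδ0, hδ1⟩ := hδ
  obtain ⟨hε0, hε1⟩ := hε
  have hNpos : (0:ℝ) < 2 ^ n := by positivity
  have hcard : (Fintype.card (Fin n → Bool) : ℝ) = 2 ^ n := by
    rw [Fintype.card_fun]; push_cast; simp
  set mf : (Fin n → Bool) → ℝ :=
    fun x => (1 - ε/4) * (if g x then (1:ℝ) else 0) + (ε/4) * h x with hmf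
  have hmf0 : ∀ x, 0 ≤ mf x ∧ mf x ≤ 1 := by
    intro x
    have h0 := (hTb h hh x).1
    have h1 := (hTb h hh x).2
    constructor <;> (simp only [hmf]; split <;> nlinarith)
  set w : (Fin n → Bool) → Bool → ℝ := fun x b => if b then mf x else 1 - mf x with hw
  have hw0 : ∀ x b, 0 ≤ w x b := by
    intro x b
    simp only [hw]
    cases b
    · simp only [Bool.false_eq_true, if_false]; linarith [(hmf0 x).2]
    · simp only [if_true]; exact (hmf0 x).1
  have hw1 : ∀ x, ∑ b, w x b = 1 := by
    intro x
    rw [Fintype.sum_bool]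
    simp only [hw, if_true, Bool.false_eq_true, if_false]
    ring
  set s : ℝ := ε * δ / 8 * 2 ^ n with hs
  have hs0 : 0 ≤ s := by positivity
  have hs2 : s ≤ 2 * (Fintype.card (Fin n → Bool) : ℝ) := by
    rw [hcard, hs]
    have hεδ : ε * δ ≤ 1 := by nlinarith
    nlinarith [mul_le_mul_of_nonneg_right hεδ hNpos.le]
  -- the per-f deviation sums
  set Dev : ((Fin n → Bool) → ℝ) → ((Fin n → Bool) → Bool) → ℝ :=
    fun f ω => ∑ x, f x * ((if ω x then (1:ℝ) else 0) - mf x) with hDev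
  set badf : ((Fin n → Bool) → ℝ) → ((Fin n → Bool) → Bool) → Prop :=
    fun f ω => (s ≤ Dev f ω) ∨ (s ≤ -(Dev f ω)) with hbadf
  set bad : ((Fin n → Bool) → Bool) → Prop :=
    fun ω => (ε < fdist n g ω) ∨ ∃ f ∈ F, badf f ω with hbad
  have hXprop : ∀ f ∈ F, (∀ (x : Fin n → Bool) (b : Bool), |f x * ((if b then (1:ℝ) else 0) - mf x)| ≤ 1)
      ∧ (∀ x, ∑ b : Bool, w x b * (f x * ((if b then (1:ℝ) else 0) - mf x)) = 0) := by
    intro f hf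
    constructor
    · intro x b
      rw [abs_mul]
      have h1 : |f x| ≤ 1 := abs_le.2 ⟨(hFb f hf x).1, (hFb f hf x).2⟩
      have h2 : |(if b then (1:ℝ) else 0) - mf x| ≤ 1 := by
        rw [abs_le]
        have := (hmf0 x).1
        have := (hmf0 x).2
        split <;> constructor <;> linarith
      calc |f x| * |(if b then (1:ℝ) else 0) - mf x| ≤ 1 * 1 :=
            mul_le_mul h1 h2 (abs_nonneg _) zero_le_one
        _ = 1 := one_mul 1
    · intro x
      rw [Fintype.sum_bool]
      simp only [hw, if_true, Bool.false_eq_true, if_false]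
      ring
  have hPbadf : ∀ f ∈ F, wPr w (badf f) ≤ 2 * Real.exp (-(s^2) / (4 * 2 ^ n)) := by
    intro f hf
    obtain ⟨hX1, hX2⟩ := hXprop f hf
    have hA := hoeffding w (fun x b => f x * ((if b then (1:ℝ) else 0) - mf x))
      hw0 hw1 hX1 hX2 hs0 hs2
    have hB := hoeffding w (fun x b => -(f x * ((if b then (1:ℝ) else 0) - mf x)))
      hw0 hw1 (fun x b => by rw [abs_neg]; exact hX1 x b)
      (fun x => by simp only [mul_neg, Finset.sum_neg_distrib, hX2 x, neg_zero]) hs0 hs2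
    rw [hcard] at hA hB
    have hsplit : wPr w (badf f) ≤ wPr w (fun ω => s ≤ Dev f ω) + wPr w (fun ω => s ≤ -(Dev f ω)) :=
      wPr_or w hw0 _ _
    have hA' : wPr w (fun ω => s ≤ Dev f ω) ≤ Real.exp (-(s^2) / (4 * 2 ^ n)) := by
      refine le_trans (le_of_eq ?_) hA
      unfold wPr
      apply Finset.sum_congr rfl
      intro ω _
      congr 1
    have hB' : wPr w (fun ω => s ≤ -(Dev f ω)) ≤ Real.exp (-(s^2) / (4 * 2 ^ n)) := by
      refine le_trans (le_of_eq ?_) hB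
      unfold wPr
      apply Finset.sum_congr rfl
      intro ω _
      congr 2
      simp only [hDev, Finset.sum_neg_distrib]
    linarith
  -- Markov bound for the distance event
  have hfd : ∀ ω : (Fin n → Bool) → Bool,
      fdist n g ω = ∑ x, (if g x ≠ ω x then (1:ℝ) else 0) / 2 ^ n := by
    intro ω
    unfold fdist
    rw [Finset.card_filter, Nat.cast_sum, Finset.sum_div]
    apply Finset.sum_congr rfl
    intro x _
    split <;> norm_num
  have hEdist : ∑ ω : (Fin n → Bool) → Bool, (∏ x, w x (ω x)) * fdist n g ω ≤ ε/4 := by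
    have step1 : ∑ ω : (Fin n → Bool) → Bool, (∏ x, w x (ω x)) * fdist n g ω
        = ∑ x : Fin n → Bool, ∑ b, w x b * ((if g x ≠ b then (1:ℝ) else 0) / 2 ^ n) := by
      rw [Finset.sum_congr rfl (fun ω _ => by rw [hfd ω, Finset.mul_sum]), Finset.sum_comm]
      apply Finset.sum_congr rfl
      intro x _
      exact marginal w hw1 x (fun b => (if g x ≠ b then (1:ℝ) else 0) / 2 ^ n)
    rw [step1]
    have step2 : ∀ x, ∑ b, w x b * ((if g x ≠ b then (1:ℝ) else 0) / 2 ^ n)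
        ≤ (ε/4) / 2 ^ n := by
      intro x
      rw [Fintype.sum_bool]
      have hh0 := (hTb h hh x).1
      have hh1 := (hTb h hh x).2
      cases hgx : g x
      · simp only [hw, hmf, hgx, if_true, if_false, Bool.false_eq_true, ne_eq,
          not_true_eq_false, not_false_eq_true, reduceCtorEq]
        have e : ((1 - ε/4) * (0:ℝ) + ε/4 * h x) * (1/2^n)
            + (1 - ((1 - ε/4) * 0 + ε/4 * h x)) * (0/2^n) = (ε/4 * h x)/2^n := by ring
        rw [e]
        apply div_le_div_of_nonneg_right ?_ hNpos.le
        nlinarith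
      · simp only [hw, hmf, hgx, if_true, if_false, Bool.false_eq_true, ne_eq,
          not_true_eq_false, not_false_eq_true, reduceCtorEq]
        have e : ((1 - ε/4) * (1:ℝ) + ε/4 * h x) * (0/2^n)
            + (1 - ((1 - ε/4) * 1 + ε/4 * h x)) * (1/2^n) = (ε/4 * (1 - h x))/2^n := by ring
        rw [e]
        apply div_le_div_of_nonneg_right ?_ hNpos.le
        nlinarith
    calc ∑ x : Fin n → Bool, ∑ b, w x b * ((if g x ≠ b then (1:ℝ) else 0) / 2 ^ n)
        ≤ ∑ _x : Fin n → Bool, (ε/4) / 2 ^ n := Finset.sum_le_sum fun x _ => step2 x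
      _ = ε/4 := by
        rw [Finset.sum_const, Finset.card_univ, nsmul_eq_mul, hcard]
        field_simp
  have hPdist : wPr w (fun ω => ε < fdist n g ω) ≤ 1/4 := by
    have hmk := markov w hw0 (fun ω => fdist n g ω) (fun ω => fdist_nonneg n g ω) hε0
    calc wPr w (fun ω => ε < fdist n g ω)
        ≤ (∑ ω : (Fin n → Bool) → Bool, (∏ x, w x (ω x)) * fdist n g ω) / ε := hmk
      _ ≤ (ε/4) / ε := div_le_div_of_nonneg_right hEdist hε0.le
      _ = 1/4 := by
        rw [div_eq_iff hε0.ne']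
        ring
  -- union bound over all bad events
  have hPbad : wPr w bad < 1 := by
    have h1 : wPr w bad ≤ wPr w (fun ω => ε < fdist n g ω)
        + wPr w (fun ω => ∃ f ∈ F, badf f ω) := by
      rw [hbad]
      exact wPr_or w hw0 _ _
    have h2 : wPr w (fun ω => ∃ f ∈ F, badf f ω) ≤ ∑ f ∈ F, wPr w (badf f) :=
      wPr_exists w hw0 F badf
    have h3 : ∑ f ∈ F, wPr w (badf f) ≤ ∑ _f ∈ F, 2 * Real.exp (-(s^2) / (4 * 2 ^ n)) :=
      Finset.sum_le_sum hPbadf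
    have h4 : ∑ _f ∈ F, 2 * Real.exp (-(s^2) / (4 * 2 ^ n))
        = 2 * (F.card : ℝ) * Real.exp (-(s^2) / (4 * 2 ^ n)) := by
      rw [Finset.sum_const, nsmul_eq_mul]
      ring
    have h5 : 2 * (F.card : ℝ) * Real.exp (-(s^2) / (4 * 2 ^ n)) ≤ 1/2 := by
      have : -(s^2) / (4 * 2 ^ n) = -s^2 / (4 * 2^n) := by ring_nf
      rw [this]
      exact hbig
    linarith
  obtain ⟨ω, hω⟩ := exists_not_of_wPr_lt_one w hw1 hPbad
  simp only [hbad, hbadf, not_or, not_lt, not_exists, not_le, not_and] at hω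
  obtain ⟨hωdist, hωdev⟩ := hω
  refine ⟨ω, ⟨h, hh, ?_⟩, hωdist⟩
  intro f hf
  have hDevb : |Dev f ω| ≤ s := by
    have h2 := hωdev f hf
    rw [abs_le]
    constructor <;> linarith [h2.1, h2.2]
  have key : ∑ x : Fin n → Bool, ((1:ℝ)/2^n) * (f x * ((if ω x then (1:ℝ) else 0) - h x))
      = (1/2^n) * Dev f ω
        + (1 - ε/4) * ∑ x : Fin n → Bool, ((1:ℝ)/2^n) * (f x * ((if g x then (1:ℝ) else 0) - h x)) := by
    rw [hDev, Finset.mul_sum, Finset.mul_sum, ← Finset.sum_add_distrib]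
    apply Finset.sum_congr rfl
    intro x _
    simp only [hmf]
    ring
  rw [key]
  have habs : |(1/2^n : ℝ) * Dev f ω
      + (1 - ε/4) * ∑ x : Fin n → Bool, ((1:ℝ)/2^n) * (f x * ((if g x then (1:ℝ) else 0) - h x))|
      ≤ (1/2^n) * s + (1 - ε/4) * (δ + ε * δ / 8) := by
    calc |(1/2^n : ℝ) * Dev f ω + (1 - ε/4) * ∑ x : Fin n → Bool,
            ((1:ℝ)/2^n) * (f x * ((if g x then (1:ℝ) else 0) - h x))|
        ≤ |(1/2^n : ℝ) * Dev f ω| + |(1 - ε/4) * ∑ x : Fin n → Bool,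
            ((1:ℝ)/2^n) * (f x * ((if g x then (1:ℝ) else 0) - h x))| := abs_add_le _ _
      _ ≤ (1/2^n) * s + (1 - ε/4) * (δ + ε * δ / 8) := by
          rw [abs_mul, abs_mul]
          have e1 : |(1/2^n : ℝ)| = 1/2^n := abs_of_pos (by positivity)
          have e2 : |(1 - ε/4 : ℝ)| = 1 - ε/4 := abs_of_pos (by linarith)
          rw [e1, e2]
          have b1 : (1/2^n : ℝ) * |Dev f ω| ≤ (1/2^n) * s :=
            mul_le_mul_of_nonneg_left hDevb (by positivity)
          have b2 : (1 - ε/4 : ℝ) * |∑ x : Fin n → Bool,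
              ((1:ℝ)/2^n) * (f x * ((if g x then (1:ℝ) else 0) - h x))|
              ≤ (1 - ε/4) * (δ + ε * δ / 8) :=
            mul_le_mul_of_nonneg_left (hclose f hf) (by linarith)
          linarith
  have hss : (1/2^n : ℝ) * s = ε * δ / 8 := by
    rw [hs]
    field_simp
  refine habs.trans ?_
  rw [hss]
  nlinarith [sq_nonneg ε, mul_pos hε0 hδ0, mul_nonneg (mul_nonneg hε0.le hε0.le) hδ0.le]

lemma acceptProb_eq (n m : ℕ) (Q : (Fin m → (Fin n → Bool)) → (Fin m → Bool) → Prop)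
    (g : (Fin n → Bool) → Bool) :
    acceptProb n m 0 (fun x y _r => @decide (Q x y) (Classical.propDecidable _)) g
      = wPr (fun (_ : Fin m) (_z : Fin n → Bool) => (1/2^n : ℝ))
          (fun x => Q x (fun i => g (x i))) := by
  unfold acceptProb wPr
  rw [pow_zero, mul_one]
  have h1 : ∀ x : Fin m → (Fin n → Bool),
      (∑ _r : Fin 0 → Bool,
        if (@decide (Q x (fun i => g (x i))) (Classical.propDecidable _)) then (1:ℝ) else 0)
      = ind (Q x (fun i => g (x i))) := by
    intro x
    rw [Finset.sum_const, Finset.card_univ]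
    have hcard0 : Fintype.card (Fin 0 → Bool) = 1 := by
      rw [Fintype.card_fun]
      simp
    rw [hcard0, one_smul]
    unfold ind
    by_cases h : Q x (fun i => g (x i))
    · rw [if_pos h, if_pos (@decide_eq_true _ (Classical.propDecidable _) h)]
    · rw [if_neg h, if_neg (by simp [h])]
  rw [Finset.sum_congr rfl (fun x _ => h1 x), Finset.sum_div]
  apply Finset.sum_congr rfl
  intro x _
  rw [Finset.prod_const, Finset.card_univ, Fintype.card_fin, div_pow, one_pow, ← pow_mul]
  ring

noncomputable def muE (n : ℕ) (f h : (Fin n → Bool) → ℝ) (g : (Fin n → Bool) → Bool) : ℝ :=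
  ∑ z : Fin n → Bool, ((1:ℝ) / 2 ^ n) * (f z * ((if g z then (1:ℝ) else 0) - h z))

def badEv (n m : ℕ) (F Temp : Finset ((Fin n → Bool) → ℝ)) (τ : ℝ)
    (g : (Fin n → Bool) → Bool) (x : Fin m → (Fin n → Bool)) : Prop :=
  ∃ f ∈ F, ∃ h ∈ Temp,
    (τ * m / 2 ≤ ∑ i : Fin m,
      (f (x i) * ((if g (x i) then (1:ℝ) else 0) - h (x i)) - muE n f h g) / 2)
    ∨ (τ * m / 2 ≤ ∑ i : Fin m,
      -((f (x i) * ((if g (x i) then (1:ℝ) else 0) - h (x i)) - muE n f h g) / 2))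

lemma card_cube (n : ℕ) : (Fintype.card (Fin n → Bool) : ℝ) = 2 ^ n := by
  rw [Fintype.card_fun]
  push_cast
  simp

lemma uniform_sum_one (n : ℕ) : ∑ _z : Fin n → Bool, ((1:ℝ)/2^n) = 1 := by
  rw [Finset.sum_const, Finset.card_univ, nsmul_eq_mul, card_cube]
  field_simp

lemma term_abs_le (n : ℕ) (f h : (Fin n → Bool) → ℝ) (g : (Fin n → Bool) → Bool)
    (hfb : ∀ x, f x ∈ Set.Icc (-1:ℝ) 1) (hhb : ∀ x, h x ∈ Set.Icc (0:ℝ) 1)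
    (z : Fin n → Bool) : |f z * ((if g z then (1:ℝ) else 0) - h z)| ≤ 1 := by
  rw [abs_mul]
  have h1 : |f z| ≤ 1 := abs_le.2 ⟨(hfb z).1, (hfb z).2⟩
  have h2 : |(if g z then (1:ℝ) else 0) - h z| ≤ 1 := by
    rw [abs_le]
    have := (hhb z).1
    have := (hhb z).2
    split <;> constructor <;> linarith
  calc |f z| * |(if g z then (1:ℝ) else 0) - h z| ≤ 1 * 1 :=
        mul_le_mul h1 h2 (abs_nonneg _) zero_le_one
    _ = 1 := one_mul 1

lemma muE_abs_le (n : ℕ) (f h : (Fin n → Bool) → ℝ) (g : (Fin n → Bool) → Bool)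
    (hfb : ∀ x, f x ∈ Set.Icc (-1:ℝ) 1) (hhb : ∀ x, h x ∈ Set.Icc (0:ℝ) 1) :
    |muE n f h g| ≤ 1 := by
  have hNpos : (0:ℝ) < 2 ^ n := by positivity
  calc |muE n f h g| ≤ ∑ z : Fin n → Bool, |((1:ℝ)/2^n) * (f z * ((if g z then (1:ℝ) else 0) - h z))| :=
        Finset.abs_sum_le_sum_abs _ _
    _ ≤ ∑ _z : Fin n → Bool, ((1:ℝ)/2^n) := by
        apply Finset.sum_le_sum
        intro z _
        rw [abs_mul, abs_of_pos (by positivity : (0:ℝ) < 1/2^n)]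
        calc (1/2^n : ℝ) * |f z * ((if g z then (1:ℝ) else 0) - h z)| ≤ (1/2^n) * 1 :=
              mul_le_mul_of_nonneg_left (term_abs_le n f h g hfb hhb z) (by positivity)
          _ = 1/2^n := mul_one _
    _ = 1 := uniform_sum_one n

lemma partB_bad (n m : ℕ) (hm : 0 < m) (F Temp : Finset ((Fin n → Bool) → ℝ))
    (hFb : ∀ f ∈ F, ∀ x, f x ∈ Set.Icc (-1 : ℝ) 1)
    (hTb : ∀ h ∈ Temp, ∀ x, h x ∈ Set.Icc (0 : ℝ) 1)
    (τ : ℝ) (hτ0 : 0 ≤ τ) (hτ4 : τ ≤ 4) (g : (Fin n → Bool) → Bool) :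
    wPr (fun (_ : Fin m) (_ : Fin n → Bool) => ((1:ℝ)/2^n)) (badEv n m F Temp τ g)
      ≤ (F.card : ℝ) * (Temp.card : ℝ) * (2 * Real.exp (-(τ^2 * m) / 16)) := by
  haveI : Nonempty (Fin m) := Fin.pos_iff_nonempty.mp hm
  set wu : Fin m → (Fin n → Bool) → ℝ := fun _ _ => ((1:ℝ)/2^n) with hwu
  have hwu0 : ∀ (i : Fin m) (z : Fin n → Bool), 0 ≤ wu i z := by
    intro i z; simp only [hwu]; positivity
  have hwu1 : ∀ i : Fin m, ∑ z : Fin n → Bool, wu i z = 1 := fun i => uniform_sum_one n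
  have hmR : (0:ℝ) < (m:ℝ) := by exact_mod_cast hm
  -- per (f,h) Hoeffding bound
  have hperf : ∀ f ∈ F, ∀ h ∈ Temp,
      wPr wu (fun x => (τ * m / 2 ≤ ∑ i : Fin m,
          (f (x i) * ((if g (x i) then (1:ℝ) else 0) - h (x i)) - muE n f h g) / 2)
        ∨ (τ * m / 2 ≤ ∑ i : Fin m,
          -((f (x i) * ((if g (x i) then (1:ℝ) else 0) - h (x i)) - muE n f h g) / 2)))
      ≤ 2 * Real.exp (-(τ^2 * m) / 16) := by
    intro f hf h hh
    set X : Fin m → (Fin n → Bool) → ℝ :=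
      fun _ z => (f z * ((if g z then (1:ℝ) else 0) - h z) - muE n f h g) / 2 with hX
    have hXb : ∀ (i : Fin m) (z : Fin n → Bool), |X i z| ≤ 1 := by
      intro i z
      simp only [hX]
      rw [abs_div, abs_of_pos (by norm_num : (0:ℝ) < 2), div_le_one (by norm_num : (0:ℝ) < 2)]
      have h1 := term_abs_le n f h g (hFb f hf) (hTb h hh) z
      have h2 := muE_abs_le n f h g (hFb f hf) (hTb h hh)
      calc |f z * ((if g z then (1:ℝ) else 0) - h z) - muE n f h g|
          ≤ |f z * ((if g z then (1:ℝ) else 0) - h z)| + |muE n f h g| := abs_sub _ _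
        _ ≤ 2 := by linarith
    have hXm : ∀ i : Fin m, ∑ z : Fin n → Bool, wu i z * X i z = 0 := by
      intro i
      simp only [hX, hwu]
      have e : ∀ z : Fin n → Bool, ((1:ℝ)/2^n) *
          ((f z * ((if g z then (1:ℝ) else 0) - h z) - muE n f h g) / 2)
          = (((1:ℝ)/2^n) * (f z * ((if g z then (1:ℝ) else 0) - h z))) / 2
            - (((1:ℝ)/2^n) * muE n f h g) / 2 := by
        intro z; ring
      rw [Finset.sum_congr rfl fun z _ => e z, Finset.sum_sub_distrib,
        ← Finset.sum_div, ← Finset.sum_div, ← Finset.sum_mul]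
      rw [uniform_sum_one n]
      have : (∑ z : Fin n → Bool, ((1:ℝ)/2^n) * (f z * ((if g z then (1:ℝ) else 0) - h z)))
          = muE n f h g := rfl
      rw [this]
      ring
    have hs0 : 0 ≤ τ * m / 2 := by positivity
    have hs2 : τ * m / 2 ≤ 2 * (Fintype.card (Fin m) : ℝ) := by
      rw [Fintype.card_fin]
      nlinarith
    have hA := hoeffding wu X hwu0 hwu1 hXb hXm hs0 hs2
    have hB := hoeffding wu (fun i z => -(X i z)) hwu0 hwu1
      (fun i z => by rw [abs_neg]; exact hXb i z)
      (fun i => by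
        have : ∀ z : Fin n → Bool, wu i z * -(X i z) = -(wu i z * X i z) := fun z => by ring
        rw [Finset.sum_congr rfl fun z _ => this z, Finset.sum_neg_distrib, hXm i, neg_zero])
      hs0 hs2
    rw [Fintype.card_fin] at hA hB
    have hexp : -((τ * m / 2)^2) / (4 * (m:ℝ)) = -(τ^2 * m) / 16 := by
      field_simp
      ring
    rw [hexp] at hA hB
    have hsplit := wPr_or wu hwu0
      (fun x => τ * m / 2 ≤ ∑ i : Fin m,
        (f (x i) * ((if g (x i) then (1:ℝ) else 0) - h (x i)) - muE n f h g) / 2)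
      (fun x => τ * m / 2 ≤ ∑ i : Fin m,
        -((f (x i) * ((if g (x i) then (1:ℝ) else 0) - h (x i)) - muE n f h g) / 2))
    have hA' : wPr wu (fun x => τ * m / 2 ≤ ∑ i : Fin m,
        (f (x i) * ((if g (x i) then (1:ℝ) else 0) - h (x i)) - muE n f h g) / 2)
        ≤ Real.exp (-(τ^2 * m) / 16) := hA
    have hB' : wPr wu (fun x => τ * m / 2 ≤ ∑ i : Fin m,
        -((f (x i) * ((if g (x i) then (1:ℝ) else 0) - h (x i)) - muE n f h g) / 2))
        ≤ Real.exp (-(τ^2 * m) / 16) := hB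
    linarith
  -- union bound
  have h1 : wPr wu (badEv n m F Temp τ g) ≤ ∑ f ∈ F, wPr wu (fun x => ∃ h ∈ Temp,
      (τ * m / 2 ≤ ∑ i : Fin m,
        (f (x i) * ((if g (x i) then (1:ℝ) else 0) - h (x i)) - muE n f h g) / 2)
      ∨ (τ * m / 2 ≤ ∑ i : Fin m,
        -((f (x i) * ((if g (x i) then (1:ℝ) else 0) - h (x i)) - muE n f h g) / 2))) := by
    have := wPr_exists wu hwu0 F (fun f x => ∃ h ∈ Temp,
      (τ * m / 2 ≤ ∑ i : Fin m,
        (f (x i) * ((if g (x i) then (1:ℝ) else 0) - h (x i)) - muE n f h g) / 2)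
      ∨ (τ * m / 2 ≤ ∑ i : Fin m,
        -((f (x i) * ((if g (x i) then (1:ℝ) else 0) - h (x i)) - muE n f h g) / 2)))
    exact this
  have h2 : ∀ f ∈ F, wPr wu (fun x => ∃ h ∈ Temp,
      (τ * m / 2 ≤ ∑ i : Fin m,
        (f (x i) * ((if g (x i) then (1:ℝ) else 0) - h (x i)) - muE n f h g) / 2)
      ∨ (τ * m / 2 ≤ ∑ i : Fin m,
        -((f (x i) * ((if g (x i) then (1:ℝ) else 0) - h (x i)) - muE n f h g) / 2)))
      ≤ (Temp.card : ℝ) * (2 * Real.exp (-(τ^2 * m) / 16)) := by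
    intro f hf
    have h3 := wPr_exists wu hwu0 Temp (fun h x =>
      (τ * m / 2 ≤ ∑ i : Fin m,
        (f (x i) * ((if g (x i) then (1:ℝ) else 0) - h (x i)) - muE n f h g) / 2)
      ∨ (τ * m / 2 ≤ ∑ i : Fin m,
        -((f (x i) * ((if g (x i) then (1:ℝ) else 0) - h (x i)) - muE n f h g) / 2)))
    refine h3.trans ?_
    calc (∑ h ∈ Temp, wPr wu fun x =>
          (τ * m / 2 ≤ ∑ i : Fin m,
            (f (x i) * ((if g (x i) then (1:ℝ) else 0) - h (x i)) - muE n f h g) / 2)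
          ∨ (τ * m / 2 ≤ ∑ i : Fin m,
            -((f (x i) * ((if g (x i) then (1:ℝ) else 0) - h (x i)) - muE n f h g) / 2)))
        ≤ ∑ _h ∈ Temp, 2 * Real.exp (-(τ^2 * m) / 16) :=
          Finset.sum_le_sum fun h hh => hperf f hf h hh
      _ = (Temp.card : ℝ) * (2 * Real.exp (-(τ^2 * m) / 16)) := by
          rw [Finset.sum_const, nsmul_eq_mul]
  calc wPr wu (badEv n m F Temp τ g)
      ≤ ∑ f ∈ F, wPr wu (fun x => ∃ h ∈ Temp,
        (τ * m / 2 ≤ ∑ i : Fin m,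
          (f (x i) * ((if g (x i) then (1:ℝ) else 0) - h (x i)) - muE n f h g) / 2)
        ∨ (τ * m / 2 ≤ ∑ i : Fin m,
          -((f (x i) * ((if g (x i) then (1:ℝ) else 0) - h (x i)) - muE n f h g) / 2))) := h1
    _ ≤ ∑ _f ∈ F, (Temp.card : ℝ) * (2 * Real.exp (-(τ^2 * m) / 16)) :=
        Finset.sum_le_sum h2
    _ = (F.card : ℝ) * (Temp.card : ℝ) * (2 * Real.exp (-(τ^2 * m) / 16)) := by
        rw [Finset.sum_const, nsmul_eq_mul]
        ring


set_option maxHeartbeats 2000000 in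
/-- **Compatibility with regularity templates is testable.** There is a universal
constant `C > 0` such that for every finite family `F` of `[-1,1]`-valued distinguishers
and finite set `Temp` of `[0,1]`-valued templates on `{0,1}^n`, and all
`δ, ε ∈ (0,1)` with `C·(1 + log(|F|·|Temp|))/(ε²·δ²) ≤ 2^n`, the compatibility property
`T_{F,δ}` is testable with proximity `ε` from some `m ≤ C·(1 + log(|F|·|Temp|))/(ε²·δ²)`
samples. -/
theorem stmt_15 : ∃ C : ℝ, 0 < C ∧
    ∀ (n : ℕ) (F Temp : Finset ((Fin n → Bool) → ℝ)),
      F.Nonempty → (∀ f ∈ F, ∀ x, f x ∈ Set.Icc (-1 : ℝ) 1) →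
      Temp.Nonempty → (∀ h ∈ Temp, ∀ x, h x ∈ Set.Icc (0 : ℝ) 1) →
      ∀ δ ε : ℝ, δ ∈ Set.Ioo (0 : ℝ) 1 → ε ∈ Set.Ioo (0 : ℝ) 1 →
      C * (1 + Real.log ((F.card : ℝ) * (Temp.card : ℝ))) / (ε ^ 2 * δ ^ 2) ≤ 2 ^ n →
      ∃ (m l : ℕ)
        (T' : (Fin m → (Fin n → Bool)) → (Fin m → Bool) → (Fin l → Bool) → Bool),
        (m : ℝ) ≤ C * (1 + Real.log ((F.card : ℝ) * (Temp.card : ℝ))) / (ε ^ 2 * δ ^ 2) ∧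
        (∀ g ∈ compat n F Temp δ, 2 / 3 ≤ acceptProb n m l T' g) ∧
        (∀ g, g ∉ closeTo n (compat n F Temp δ) ε → acceptProb n m l T' g ≤ 1 / 3) := by
  refine ⟨1000000, by norm_num, ?_⟩
  intro n F Temp hFne hFb hTne hTb δ ε hδ hε hbig
  obtain ⟨hδ0, hδ1⟩ := hδ
  obtain ⟨hε0, hε1⟩ := hε
  have hFc : (1:ℝ) ≤ (F.card : ℝ) := by
    exact_mod_cast Nat.one_le_iff_ne_zero.mpr (Finset.card_ne_zero_of_mem hFne.choose_spec)
  have hTc : (1:ℝ) ≤ (Temp.card : ℝ) := by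
    exact_mod_cast Nat.one_le_iff_ne_zero.mpr (Finset.card_ne_zero_of_mem hTne.choose_spec)
  have hFT1 : (1:ℝ) ≤ (F.card : ℝ) * (Temp.card : ℝ) := by nlinarith
  have hFTpos : (0:ℝ) < (F.card : ℝ) * (Temp.card : ℝ) := by linarith
  set L : ℝ := Real.log ((F.card : ℝ) * (Temp.card : ℝ)) with hLdef
  have hL0 : 0 ≤ L := Real.log_nonneg hFT1
  have hexpL : Real.exp L = (F.card : ℝ) * (Temp.card : ℝ) := Real.exp_log hFTpos
  have hεδ : (0:ℝ) < ε ^ 2 * δ ^ 2 := by positivity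
  have hεδlt : ε * δ < 1 := by nlinarith
  have hεδ1 : ε ^ 2 * δ ^ 2 ≤ 1 := by nlinarith [mul_pos hε0 hδ0, hεδlt]
  set B : ℝ := (1 + L) / (ε ^ 2 * δ ^ 2) with hB
  have hB1 : 1 ≤ B := by
    rw [hB, le_div_iff₀ hεδ]
    nlinarith
  set m : ℕ := ⌈(16384:ℝ) * B⌉₊ with hm
  have hmB : (16384:ℝ) * B ≤ (m:ℝ) := Nat.le_ceil _
  have hm0 : 0 < m := by
    rw [hm, Nat.ceil_pos]
    nlinarith
  haveI : Nonempty (Fin m) := Fin.pos_iff_nonempty.mp hm0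
  have hmR : (0:ℝ) < (m:ℝ) := by exact_mod_cast hm0
  have hmub : (m:ℝ) ≤ 1000000 * (1 + L) / (ε ^ 2 * δ ^ 2) := by
    have h1 : (m:ℝ) ≤ 16384 * B + 1 := le_of_lt (Nat.ceil_lt_add_one (by nlinarith))
    have h2 : 1000000 * (1 + L) / (ε ^ 2 * δ ^ 2) = 1000000 * B := by
      rw [hB]; ring
    rw [h2]
    linarith
  -- consequences of the hypothesis on 2^n
  have hNpos : (0:ℝ) < 2 ^ n := by positivity
  have h2n : 1000000 * (1 + L) ≤ ε ^ 2 * δ ^ 2 * 2 ^ n := by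
    rw [div_le_iff₀ hεδ] at hbig
    nlinarith
  -- exponential numerics
  have he1 : (2.7:ℝ) ≤ Real.exp 1 := by
    have := Real.exp_one_gt_d9
    linarith
  have hexp2 : (4:ℝ) ≤ Real.exp 2 := by
    have h : Real.exp 2 = Real.exp 1 * Real.exp 1 := by
      rw [← Real.exp_add]; norm_num
    nlinarith
  have hexp4 : (9:ℝ) ≤ Real.exp 4 := by
    have h : Real.exp 4 = Real.exp 2 * Real.exp 2 := by
      rw [← Real.exp_add]; norm_num
    nlinarith
  set τ : ℝ := ε * δ / 16 with hτ
  have hτ0 : 0 ≤ τ := by positivity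
  have hτ4 : τ ≤ 4 := by nlinarith
  -- the tester
  set Q : (Fin m → (Fin n → Bool)) → (Fin m → Bool) → Prop := fun x y =>
    ∃ h ∈ Temp, ∀ f ∈ F,
      |∑ i : Fin m, f (x i) * ((if y i then (1:ℝ) else 0) - h (x i))| ≤ (δ + τ) * m with hQ
  -- uniform weights and shared probability facts
  set wu : Fin m → (Fin n → Bool) → ℝ := fun _ _ => ((1:ℝ)/2^n) with hwu
  have hwu0 : ∀ (i : Fin m) (z : Fin n → Bool), 0 ≤ wu i z := by
    intro i z; simp only [hwu]; positivity
  have hwu1 : ∀ i : Fin m, ∑ z : Fin n → Bool, wu i z = 1 := fun i => uniform_sum_one n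
  -- bound on the bad event probability
  have hbadnum : (F.card : ℝ) * (Temp.card : ℝ) * (2 * Real.exp (-(τ^2 * m) / 16)) ≤ 1/3 := by
    have harg : 4 * (1 + L) ≤ τ^2 * m / 16 := by
      have h1 : 16384 * (1 + L) ≤ (m:ℝ) * (ε^2 * δ^2) := by
        have h2 : 16384 * B * (ε^2*δ^2) = 16384 * (1+L) := by
          rw [hB]
          field_simp
        nlinarith [mul_le_mul_of_nonneg_right hmB hεδ.le]
      have h3 : τ^2 * m / 16 = (m:ℝ) * (ε^2*δ^2) / 4096 := by
        rw [hτ]; ring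
      rw [h3]
      linarith
    have hmono : Real.exp (-(τ^2 * m) / 16) ≤ Real.exp (-(4 + 4*L)) := by
      apply Real.exp_le_exp.mpr
      have : -(τ^2 * m) / 16 = -(τ^2 * m / 16) := by ring
      rw [this]
      linarith
    have he : Real.exp (4 + 4*L) = Real.exp 4 * ((F.card : ℝ) * (Temp.card : ℝ))^4 := by
      rw [Real.exp_add]
      congr 1
      rw [show (4:ℝ)*L = ((4:ℕ):ℝ)*L by norm_num, Real.exp_nat_mul, hexpL]
    have hp : 9 * ((F.card : ℝ) * (Temp.card : ℝ)) ≤ Real.exp (4 + 4*L) := by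
      rw [he]
      have h4 : (F.card : ℝ) * (Temp.card : ℝ) ≤ ((F.card : ℝ) * (Temp.card : ℝ))^4 :=
        le_self_pow₀ hFT1 (by norm_num)
      nlinarith [pow_nonneg hFTpos.le 4]
    have hq : Real.exp (-(4 + 4*L)) ≤ (9 * ((F.card : ℝ) * (Temp.card : ℝ)))⁻¹ := by
      rw [Real.exp_neg]
      exact inv_anti₀ (by positivity) hp
    calc (F.card : ℝ) * (Temp.card : ℝ) * (2 * Real.exp (-(τ^2 * m) / 16))
        ≤ (F.card : ℝ) * (Temp.card : ℝ) * (2 * (9 * ((F.card : ℝ) * (Temp.card : ℝ)))⁻¹) := by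
          apply mul_le_mul_of_nonneg_left _ hFTpos.le
          apply mul_le_mul_of_nonneg_left (hmono.trans hq) (by norm_num)
      _ = 2/9 := by
          field_simp
      _ ≤ 1/3 := by norm_num
  have hbadle : ∀ g : (Fin n → Bool) → Bool,
      wPr wu (badEv n m F Temp τ g) ≤ 1/3 :=
    fun g => (partB_bad n m hm0 F Temp hFb hTb τ hτ0 hτ4 g).trans hbadnum
  -- the partA hypothesis
  have hbig2 : 2 * (F.card : ℝ) * Real.exp (-((ε * δ / 8 * 2 ^ n) ^ 2) / (4 * 2 ^ n)) ≤ 1 / 2 := by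
    have harg : 2 * (1 + L) ≤ (ε * δ / 8 * 2 ^ n) ^ 2 / (4 * 2 ^ n) := by
      have h3 : (ε * δ / 8 * 2 ^ n) ^ 2 / (4 * 2 ^ n) = ε^2 * δ^2 * 2^n / 256 := by
        field_simp
        ring
      rw [h3]
      linarith
    have hmono : Real.exp (-((ε * δ / 8 * 2 ^ n) ^ 2) / (4 * 2 ^ n))
        ≤ Real.exp (-(2 + 2*L)) := by
      apply Real.exp_le_exp.mpr
      rw [neg_div]
      linarith
    have he : Real.exp (2 + 2*L) = Real.exp 2 * ((F.card : ℝ) * (Temp.card : ℝ))^2 := by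
      rw [Real.exp_add]
      congr 1
      rw [show (2:ℝ)*L = ((2:ℕ):ℝ)*L by norm_num, Real.exp_nat_mul, hexpL]
    have hp : 4 * ((F.card : ℝ) * (Temp.card : ℝ)) ≤ Real.exp (2 + 2*L) := by
      rw [he]
      have h4 : (F.card : ℝ) * (Temp.card : ℝ) ≤ ((F.card : ℝ) * (Temp.card : ℝ))^2 :=
        le_self_pow₀ hFT1 (by norm_num)
      nlinarith [pow_nonneg hFTpos.le 2]
    have hq : Real.exp (-(2 + 2*L)) ≤ (4 * ((F.card : ℝ) * (Temp.card : ℝ)))⁻¹ := by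
      rw [Real.exp_neg]
      exact inv_anti₀ (by positivity) hp
    calc 2 * (F.card : ℝ) * Real.exp (-((ε * δ / 8 * 2 ^ n) ^ 2) / (4 * 2 ^ n))
        ≤ 2 * (F.card : ℝ) * (4 * ((F.card : ℝ) * (Temp.card : ℝ)))⁻¹ := by
          apply mul_le_mul_of_nonneg_left (hmono.trans hq) (by positivity)
      _ = 1 / (2 * (Temp.card : ℝ)) := by
          field_simp
          ring
      _ ≤ 1 / 2 := by
          apply div_le_div_of_nonneg_left (by norm_num) (by norm_num) ?_
          linarith
  -- the summation identity
  have hsumid : ∀ (f h : (Fin n → Bool) → ℝ) (g : (Fin n → Bool) → Bool)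
      (x : Fin m → (Fin n → Bool)),
      ∑ i : Fin m, (f (x i) * ((if g (x i) then (1:ℝ) else 0) - h (x i)) - muE n f h g) / 2
        = ((∑ i : Fin m, f (x i) * ((if g (x i) then (1:ℝ) else 0) - h (x i)))
            - (m:ℝ) * muE n f h g) / 2 := by
    intro f h g x
    rw [← Finset.sum_div]
    congr 1
    rw [Finset.sum_sub_distrib, Finset.sum_const, Finset.card_univ, Fintype.card_fin,
      nsmul_eq_mul]
  refine ⟨m, 0, fun x y _r => @decide (Q x y) (Classical.propDecidable _), hmub, ?_, ?_⟩
  -- completeness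
  · intro g hg
    obtain ⟨h0, hh0, hμb⟩ := hg
    rw [acceptProb_eq n m Q g]
    have hcompl := wPr_compl wu hwu1 (fun x => Q x (fun i => g (x i)))
    have himp : ∀ x : Fin m → (Fin n → Bool),
        ¬ badEv n m F Temp τ g x → Q x (fun i => g (x i)) := by
      intro x hnb
      simp only [badEv, not_exists, not_or, not_le, not_and] at hnb
      refine ⟨h0, hh0, ?_⟩
      intro f hf
      obtain ⟨hd1, hd2⟩ := hnb f hf h0 hh0
      rw [hsumid f h0 g x] at hd1
      rw [Finset.sum_neg_distrib, hsumid f h0 g x] at hd2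
      have hμ0 : |muE n f h0 g| ≤ δ := hμb f hf
      have habs : |(∑ i : Fin m, f (x i) * ((if g (x i) then (1:ℝ) else 0) - h0 (x i)))
          - (m:ℝ) * muE n f h0 g| ≤ τ * m := by
        rw [abs_le]
        constructor <;> nlinarith
      have h5 : |(m:ℝ) * muE n f h0 g| ≤ δ * m := by
        rw [abs_mul, abs_of_pos hmR]
        nlinarith [abs_nonneg (muE n f h0 g)]
      have h6 := abs_sub_abs_le_abs_sub
        (∑ i : Fin m, f (x i) * ((if g (x i) then (1:ℝ) else 0) - h0 (x i)))
        ((m:ℝ) * muE n f h0 g)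
      nlinarith [abs_nonneg ((∑ i : Fin m, f (x i) * ((if g (x i) then (1:ℝ) else 0) - h0 (x i))) - (m:ℝ) * muE n f h0 g)]
    have hmono2 : wPr wu (fun x => ¬ Q x (fun i => g (x i)))
        ≤ wPr wu (badEv n m F Temp τ g) := by
      apply wPr_mono wu hwu0
      intro x hx
      by_contra hb
      exact hx (himp x hb)
    have := hbadle g
    linarith
  -- soundness
  · intro g hgfar
    rw [acceptProb_eq n m Q g]
    have himp2 : ∀ x : Fin m → (Fin n → Bool),
        Q x (fun i => g (x i)) → badEv n m F Temp τ g x := by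
      intro x hQx
      by_contra hnb
      simp only [badEv, not_exists, not_or, not_le, not_and] at hnb
      obtain ⟨h1, hh1, hS⟩ := hQx
      have hcl : ∀ f ∈ F, |∑ z : Fin n → Bool, ((1 : ℝ) / 2 ^ n) *
          (f z * ((if g z then (1 : ℝ) else 0) - h1 z))| ≤ δ + ε * δ / 8 := by
        intro f hf
        have h2 : |∑ i : Fin m, f (x i) * ((if g (x i) then (1:ℝ) else 0) - h1 (x i))|
            ≤ (δ + τ) * m := hS f hf
        obtain ⟨hd1, hd2⟩ := hnb f hf h1 hh1
        rw [hsumid f h1 g x] at hd1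
        rw [Finset.sum_neg_distrib, hsumid f h1 g x] at hd2
        have habs : |(∑ i : Fin m, f (x i) * ((if g (x i) then (1:ℝ) else 0) - h1 (x i)))
            - (m:ℝ) * muE n f h1 g| ≤ τ * m := by
          rw [abs_le]
          constructor <;> nlinarith
        have h7 : |(m:ℝ) * muE n f h1 g| ≤ (δ + 2*τ) * m := by
          have h8 := abs_sub_abs_le_abs_sub ((m:ℝ) * muE n f h1 g)
            (∑ i : Fin m, f (x i) * ((if g (x i) then (1:ℝ) else 0) - h1 (x i)))
          have h9 : |(m:ℝ) * muE n f h1 g - ∑ i : Fin m,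
              f (x i) * ((if g (x i) then (1:ℝ) else 0) - h1 (x i))| ≤ τ * m := by
            rw [← abs_neg]
            have e : -((m:ℝ) * muE n f h1 g - ∑ i : Fin m,
                f (x i) * ((if g (x i) then (1:ℝ) else 0) - h1 (x i)))
                = (∑ i : Fin m, f (x i) * ((if g (x i) then (1:ℝ) else 0) - h1 (x i)))
                  - (m:ℝ) * muE n f h1 g := by ring
            rw [e]
            exact habs
          linarith
        have h10 : |muE n f h1 g| ≤ δ + 2*τ := by
          rw [abs_mul, abs_of_pos hmR] at h7
          have := le_of_mul_le_mul_right (by linarith [h7] : |muE n f h1 g| * (m:ℝ) ≤ (δ + 2*τ) * m) hmR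
          exact this
        have h11 : δ + 2*τ = δ + ε * δ / 8 := by rw [hτ]; ring
        rw [h11] at h10
        exact h10
      exact hgfar (partA n F Temp hFb hTb ⟨hδ0, hδ1⟩ ⟨hε0, hε1⟩ hbig2 g h1 hh1 hcl)
    have hmono3 : wPr wu (fun x => Q x (fun i => g (x i)))
        ≤ wPr wu (badEv n m F Temp τ g) := wPr_mono wu hwu0 himp2
    have := hbadle g
    linarith
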